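/- Let x be a vector in F_q^n of Hamming weight w. If gcd(n, w) = 1, then the i-th cyclic shift of x differs from x for all i = 1, ..., n-1. -/

import Mathlib

open Fin.NatCast

/-- The right cyclic shift on `Fin n → F`: `(σ x) j = x (j - 1)`. -/
def cyclicShift {F : Type*} {n : ℕ} [NeZero n] (x : Fin n → F) : Fin n → F :=
  fun j => x (j - 1)

/-- The Hamming weight: number of nonzero coordinates. -/
def hWeight {F : Type*} [Zero F] [DecidableEq F] {n : ℕ} (x : Fin n → F) : ℕ :=
  (Finset.univ.filter (fun j => x j ≠ 0)).card

lemma cyclicShift_iterate {F : Type*} {n : ℕ} [NeZero n] (i : ℕ) (x : Fin n → F)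
    (j : Fin n) : cyclicShift^[i] x j = x (j - (i : Fin n)) := by
  induction i generalizing x with
  | zero => simp
  | succ i ih =>
    rw [Function.iterate_succ_apply, ih (cyclicShift x)]
    show x (j - (i : Fin n) - 1) = _
    have : ((i + 1 : ℕ) : Fin n) = (i : Fin n) + 1 := by push_cast; ring
    rw [this, sub_sub]

/-- if `gcd(n, w) = 1` where `w` is the weight of `x`, then
`σ^i(x) ≠ x` for all `i = 1, …, n-1`. -/
theorem shift_ne_of_gcd_weight_one {F : Type*} [Field F] [DecidableEq F]
    {n : ℕ} [NeZero n] (x : Fin n → F)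
    (h : Nat.gcd n (hWeight x) = 1) :
    ∀ i : ℕ, 1 ≤ i → i ≤ n - 1 → cyclicShift^[i] x ≠ x := by
  intro i hi1 hi2 hfix
  classical
  set i' : Fin n := (i : Fin n) with hi'
  -- basic invariance: x (j - i') = x j
  have hfix' : ∀ j : Fin n, x (j - i') = x j := by
    intro j
    conv_rhs => rw [← hfix]
    rw [cyclicShift_iterate]
  have hstep : ∀ a : Fin n, x (a + i') = x a := by
    intro a
    have := hfix' (a + i')
    rw [add_sub_cancel_right] at this
    exact this.symm
  set H : AddSubgroup (Fin n) := AddSubgroup.zmultiples i' with hH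
  have hinv : ∀ h ∈ H, ∀ j : Fin n, x (j + h) = x j := by
    intro h hh j
    obtain ⟨k, rfl⟩ := AddSubgroup.mem_zmultiples_iff.mp hh
    clear hh
    induction k using Int.induction_on with
    | zero => simp
    | succ k ih =>
      have : ((k : ℤ) + 1) • i' = (k : ℤ) • i' + i' := by
        rw [add_smul, one_smul]
      rw [this, ← add_assoc, hstep, ih]
    | pred k ih =>
      have : (-(k : ℤ) - 1) • i' = -(k : ℤ) • i' - i' := by
        rw [sub_smul, one_smul]
      rw [this, ← add_sub_assoc, hfix', ih]
  -- the support
  set S : Finset (Fin n) := Finset.univ.filter (fun j => x j ≠ 0) with hS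
  -- card H divides card S
  have hdvd : Nat.card H ∣ S.card := by
    have hcard : S.card = ∑ q ∈ (Finset.univ : Finset (Fin n ⧸ H)),
        (S.filter fun a => (QuotientAddGroup.mk a : Fin n ⧸ H) = q).card :=
      Finset.card_eq_sum_card_fiberwise (fun a _ => Finset.mem_univ _)
    rw [hcard]
    apply Finset.dvd_sum
    intro q _
    rcases (S.filter fun a => (QuotientAddGroup.mk a : Fin n ⧸ H) = q).eq_empty_or_nonempty
      with he | ⟨j0, hj0⟩
    · simp [he]
    · have hj0' := Finset.mem_filter.mp hj0
      have hx0 : x j0 ≠ 0 := (Finset.mem_filter.mp hj0'.1).2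
      have hq : (QuotientAddGroup.mk j0 : Fin n ⧸ H) = q := hj0'.2
      have hTeq : (S.filter fun a => (QuotientAddGroup.mk a : Fin n ⧸ H) = q) =
          Finset.image (fun h : H => j0 + (h : Fin n)) Finset.univ := by
        ext j
        simp only [Finset.mem_filter, Finset.mem_image, Finset.mem_univ, true_and, hS]
        constructor
        · rintro ⟨hxj, hjq⟩
          have : (QuotientAddGroup.mk j : Fin n ⧸ H) = QuotientAddGroup.mk j0 := by
            rw [hjq, hq]
          have hmem : -j0 + j ∈ H := (QuotientAddGroup.eq ).mp this.symm
          exact ⟨⟨-j0 + j, hmem⟩, by simp⟩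
        · rintro ⟨hsub, rfl⟩
          refine ⟨?_, ?_⟩
          · rw [hinv (hsub : Fin n) hsub.2]; exact hx0
          · rw [← hq]
            exact (QuotientAddGroup.eq).mpr (by simpa using hsub.2)
      rw [hTeq, Finset.card_image_of_injective _ (fun a b hab =>
        Subtype.ext (add_left_cancel hab))]
      rw [Finset.card_univ, Nat.card_eq_fintype_card]
  -- card H divides n
  have hdvdn : Nat.card H ∣ n := by
    have := AddSubgroup.card_addSubgroup_dvd_card H
    simpa using this
  -- hence card H = 1
  have h1 : Nat.card H = 1 :=
    Nat.eq_one_of_dvd_one (h ▸ Nat.dvd_gcd hdvdn hdvd)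
  have hHbot : H = ⊥ := AddSubgroup.card_eq_one.mp h1
  have hi0 : i' = 0 := by
    have : i' ∈ H := AddSubgroup.mem_zmultiples i'
    rw [hHbot] at this
    simpa using this
  have : (n : ℕ) ∣ i := by
    rwa [hi', Fin.natCast_eq_zero] at hi0
  have := Nat.le_of_dvd (by omega) this
  omega
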